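/- Let N be a finite solvable group and M a nilpotent normal subgroup of N whose quotient N/M is also nilpotent. Assume that for all distinct primes p dividing |N| and q dividing |M|, every Sylow p-subgroup of N centralizes the (unique) Sylow q-subgroup of M. Then N is nilpotent. -/

import Mathlib

open CategoryTheory
open scoped BigOperators Classical Pointwise

/-- `χ` is the character of some finite-dimensional complex representation of `G`. -/
def IsChar (G : Type) [Group G] (χ : G → ℂ) : Prop :=
  ∃ V : FDRep ℂ G, FDRep.character V = χ

/-- `χ` is an irreducible complex character of `G`. -/
def IsIrrChar (G : Type) [Group G] (χ : G → ℂ) : Prop :=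
  ∃ V : FDRep ℂ G, Simple V ∧ FDRep.character V = χ

/-- `χ` is a character of `G` with determinantal (linear) character `δ`. -/
def IsCharWithDet (G : Type) [Group G] (χ : G → ℂ) (δ : G →* ℂ) : Prop :=
  ∃ V : FDRep ℂ G, FDRep.character V = χ ∧ ∀ g : G, δ g = LinearMap.det (V.ρ g)

/-- The induced class function from a subgroup `H` of `G` to `G`. -/
noncomputable def indChar {G : Type} [Group G] [Fintype G] (H : Subgroup G)
    (f : H → ℂ) : G → ℂ := fun g =>
  (Fintype.card H : ℂ)⁻¹ * ∑ x : G, if h : x * g * x⁻¹ ∈ H then f ⟨x * g * x⁻¹, h⟩ else 0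

/-- The class function of `K` induced from a function on a subgroup `H ≤ K` of `G`. -/
noncomputable def indCharRel {G : Type} [Group G] [Fintype G] (H K : Subgroup G)
    (f : H → ℂ) : K → ℂ := fun g =>
  (Fintype.card H : ℂ)⁻¹ *
    ∑ x : K, if h : (↑x * ↑g * (↑x)⁻¹ : G) ∈ H then f ⟨(↑x * ↑g * (↑x)⁻¹ : G), h⟩ else 0

/-- `χ` is a monomial character: induced from a linear character of some subgroup. -/
def IsMonomial {G : Type} [Group G] [Fintype G] (χ : G → ℂ) : Prop :=
  ∃ (H : Subgroup G) (lam : H →* ℂ), indChar H (fun h => lam h) = χ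

/-- `g` fixes the function `f` defined on the subgroup `H` under conjugation. -/
def fixesFn {G : Type} [Group G] (g : G) (H : Subgroup G) (f : H → ℂ) : Prop :=
  ∀ (x : G) (hx : x ∈ H) (hx' : g⁻¹ * x * g ∈ H), f ⟨g⁻¹ * x * g, hx'⟩ = f ⟨x, hx⟩

/-- The character `χ` of `G` lies over the irreducible character `f` of the subgroup `H`
(nonzero inner product of the restriction with `f`). -/
def liesOver {G : Type} [Group G] [Fintype G] (H : Subgroup G) (χ : G → ℂ)
    (f : H → ℂ) : Prop :=
  (∑ x : H, χ ↑x * (starRingEnd ℂ) (f x)) ≠ 0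

/-- The character `χ` of the subgroup `K` lies over the character `f` of `H ≤ K`. -/
def liesOverRel {G : Type} [Group G] [Fintype G] (H K : Subgroup G) (hHK : H ≤ K)
    (χ : K → ℂ) (f : H → ℂ) : Prop :=
  (∑ x : H, χ ⟨↑x, hHK x.2⟩ * (starRingEnd ℂ) (f x)) ≠ 0

/-- The Frattini subgroup: intersection of all maximal subgroups. -/
def frattiniSub (G : Type*) [Group G] : Subgroup G :=
  ⨅ M ∈ {M : Subgroup G | IsCoatom M}, M

/-- A finite group is `p`-solvable if it has a subnormal series each of whose factors
is either a `p`-group or a `p'`-group. -/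
def IsPSolvable (p : ℕ) (G : Type*) [Group G] : Prop :=
  ∃ (n : ℕ) (c : Fin (n + 1) → Subgroup G),
    c 0 = ⊥ ∧ c (Fin.last n) = ⊤ ∧
    ∀ i : Fin n,
      c i.castSucc ≤ c i.succ ∧
      (∀ g ∈ c i.succ, ∀ x ∈ c i.castSucc, g * x * g⁻¹ ∈ c i.castSucc) ∧
      ((∃ k : ℕ, Nat.card (c i.succ) = p ^ k * Nat.card (c i.castSucc)) ∨
        Nat.Coprime (Nat.card (c i.succ) / Nat.card (c i.castSucc)) p)

/-- A finite solvable group `N` with a nilpotent normal subgroup `M` such that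
`N/M` is nilpotent and every Sylow `p`-subgroup of `N` centralizes the Sylow `q`-subgroup of
`M` for all distinct primes `p ∣ |N|`, `q ∣ |M|`, is nilpotent. -/
private lemma aux_commute_conj_eq {G : Type*} [Group G] {x c : G} (h : Commute x c) :
    c * x * c⁻¹ = x := by
  rw [← h.eq]; group

/-- A normal `p`-subgroup is contained in every Sylow `p`-subgroup. -/
private lemma aux_normal_le_sylow {G : Type*} [Group G] [Finite G] {p : ℕ} [Fact p.Prime]
    {H : Subgroup G} (hH : IsPGroup p H) (hn : H.Normal) (P : Sylow p G) : H ≤ P := by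
  obtain ⟨Q, hQ⟩ := hH.exists_le_sylow
  obtain ⟨g, hg⟩ := MulAction.exists_smul_eq G Q P
  have h1 : MulAut.conj g • H ≤ MulAut.conj g • (Q : Subgroup G) := by
    rw [Subgroup.pointwise_smul_def, Subgroup.pointwise_smul_def]
    exact Subgroup.map_mono hQ
  rw [Subgroup.Normal.conj_smul_eq_self] at h1
  calc H ≤ MulAut.conj g • (Q : Subgroup G) := h1
    _ = ↑(g • Q) := rfl
    _ = ↑P := by rw [hg]

/-- A subgroup containing a Sylow subgroup for every prime is the whole group. -/
private lemma aux_eq_top {G : Type*} [Group G] [Fintype G] {K : Subgroup G}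
    (h : ∀ (q : ℕ), q.Prime → ∃ Q : Sylow q G, (Q : Subgroup G) ≤ K) : K = ⊤ := by
  apply Subgroup.eq_top_of_card_eq
  have hdvd : Nat.card K ∣ Nat.card G := Subgroup.card_subgroup_dvd_card K
  have hdvd' : Nat.card G ∣ Nat.card K := by
    rw [← Nat.factorization_le_iff_dvd Nat.card_pos.ne' Nat.card_pos.ne', Finsupp.le_iff]
    intro q hq
    have hqp : q.Prime := Nat.prime_of_mem_primeFactors
      (by rwa [Nat.support_factorization] at hq)
    haveI : Fact q.Prime := ⟨hqp⟩
    obtain ⟨Q, hQK⟩ := h q hqp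
    have hcard : Nat.card Q = q ^ (Nat.card G).factorization q := Q.card_eq_multiplicity
    have hdq : q ^ (Nat.card G).factorization q ∣ Nat.card K := by
      rw [← hcard]; exact Subgroup.card_dvd_of_le hQK
    exact (Nat.Prime.pow_dvd_iff_le_factorization hqp Nat.card_pos.ne').mp hdq
  exact Nat.dvd_antisymm hdvd hdvd'

theorem stmt0 {N : Type*} [Group N] [Fintype N] (hsolv : IsSolvable N)
    (M : Subgroup N) [M.Normal]
    (hMnil : Group.IsNilpotent M) (hquot : Group.IsNilpotent (N ⧸ M))
    (hcent : ∀ (p q : ℕ), p.Prime → q.Prime → p ≠ q →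
      p ∣ Fintype.card N → q ∣ Fintype.card M →
      ∀ (P : Sylow p N) (Q : Sylow q M),
        ∀ x ∈ (P : Subgroup N), ∀ y ∈ Subgroup.map M.subtype (Q : Subgroup M),
          Commute x y) :
    Group.IsNilpotent N := by
  have h14M := ((isNilpotent_of_finite_tfae (G := M)).out 0 3).mp hMnil
  have h14Q := ((isNilpotent_of_finite_tfae (G := N ⧸ M)).out 0 3).mp hquot
  have key : ∀ (p : ℕ) (_hp : Fact p.Prime) (P : Sylow p N), (↑P : Subgroup N).Normal := by
    intro p hp P
    by_cases hpN : p ∣ Fintype.card N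
    · -- Step 1: M ≤ normalizer P
      have hMnorm : M ≤ Subgroup.normalizer ((P : Subgroup N) : Set N) := by
        have hK : ((Subgroup.normalizer ((P : Subgroup N) : Set N)).comap M.subtype) = ⊤ := by
          apply aux_eq_top
          intro q hq
          haveI : Fact q.Prime := ⟨hq⟩
          obtain ⟨Q⟩ : Nonempty (Sylow q M) := inferInstance
          refine ⟨Q, ?_⟩
          by_cases hqM : q ∣ Fintype.card M
          · by_cases hqp : q = p
            · subst hqp
              have hQnorm : (Q : Subgroup M).Normal := h14M q ⟨hq⟩ Q
              haveI : (Q : Subgroup M).Characteristic := Q.characteristic_of_normal hQnorm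
              have himgnorm : ((Q : Subgroup M).map M.subtype).Normal :=
                ConjAct.normal_of_characteristic_of_normal
              have hle : (Q : Subgroup M).map M.subtype ≤ P :=
                aux_normal_le_sylow (Q.isPGroup'.map M.subtype) himgnorm P
              intro y hy
              simp only [Subgroup.mem_comap]
              exact Subgroup.le_normalizer (hle ⟨y, hy, rfl⟩)
            · have hcomm := hcent p q hp.out hq (fun h => hqp h.symm) hpN hqM P Q
              intro y hy
              simp only [Subgroup.mem_comap]
              rw [Subgroup.mem_normalizer_iff]
              intro x
              constructor
              · intro hx
                show (y : N) * x * (y : N)⁻¹ ∈ (P : Subgroup N)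
                rw [aux_commute_conj_eq (hcomm x hx (↑y) ⟨y, hy, rfl⟩)]
                exact hx
              · intro hx
                have hz : (y : N) * x * (y : N)⁻¹ ∈ (P : Subgroup N) := hx
                have hc := hcomm _ hz (↑y) ⟨y, hy, rfl⟩
                have he := aux_commute_conj_eq hc.inv_right
                rw [inv_inv] at he
                have hxeq : x = (y : N)⁻¹ * ((y : N) * x * (y : N)⁻¹) * (y : N) := by group
                rw [hxeq, he]
                exact hz
          · have hQbot : (Q : Subgroup M) = ⊥ := by
              rw [← Subgroup.card_eq_one, Q.card_eq_multiplicity,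
                Nat.factorization_eq_zero_of_not_dvd
                  (by simpa [Nat.card_eq_fintype_card] using hqM),
                pow_zero]
            rw [hQbot]
            exact bot_le
        intro y hy
        have hmem : (⟨y, hy⟩ : M) ∈ ((Subgroup.normalizer ((P : Subgroup N) : Set N)).comap M.subtype) :=
          hK ▸ Subgroup.mem_top _
        exact hmem
      -- Step 2: L := P ⊔ M is normal in N
      have hLnorm : ((P : Subgroup N) ⊔ M).Normal := by
        have heq : (P : Subgroup N) ⊔ M =
            (((P : Subgroup N).map (QuotientGroup.mk' M)).comap (QuotientGroup.mk' M)) := by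
          rw [Subgroup.comap_map_eq, QuotientGroup.ker_mk']
        rw [heq]
        have hS : (((Sylow.mapSurjective (QuotientGroup.mk'_surjective M) P) :
            Sylow p (N ⧸ M)) : Subgroup (N ⧸ M)).Normal :=
          h14Q p hp _
        exact hS.comap _
      -- Step 3: Frattini argument
      have hfratt := Sylow.normalizer_sup_eq_top' (N := (P : Subgroup N) ⊔ M) P le_sup_left
      have hle : (P : Subgroup N) ⊔ M ≤ Subgroup.normalizer ((P : Subgroup N) : Set N) :=
        sup_le Subgroup.le_normalizer hMnorm
      rw [← Subgroup.normalizer_eq_top_iff, ← hfratt, P.coe_coe, left_eq_sup]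
      exact hle
    · have hbot : (P : Subgroup N) = ⊥ := by
        rw [← Subgroup.card_eq_one, P.card_eq_multiplicity,
          Nat.factorization_eq_zero_of_not_dvd
            (by simpa [Nat.card_eq_fintype_card] using hpN),
          pow_zero]
      rw [hbot]
      infer_instance
  exact ((isNilpotent_of_finite_tfae (G := N)).out 0 3).mpr key
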